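/- Let u, v > 0 and suppose k = 1 + u/v satisfies: |π − p/q| < 1/q^k for infinitely many coprime positive integers (p, q). Then the sequence a_n = 1/(n^u · |sin n|^v) diverges (does not converge to any limit), because it has a subsequence bounded below by a positive constant and a subsequence tending to 0. -/
import Mathlib

open Real Filter

lemma sin_nat_ne_zero {n : ℕ} (hn : 0 < n) : Real.sin n ≠ 0 := by
  intro h
  obtain ⟨m, hm⟩ := Real.sin_eq_zero_iff.1 h
  have hm0 : (m : ℝ) ≠ 0 := by
    intro h0
    rw [h0, zero_mul] at hm
    have : (n : ℝ) ≠ 0 := Nat.cast_ne_zero.2 hn.ne'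
    exact this hm.symm
  apply irrational_pi
  refine ⟨(n : ℚ) / (m : ℚ), ?_⟩
  push_cast
  field_simp
  linarith [hm]

lemma key_pair (u v : ℝ) (hu : 0 < u) (hv : 0 < v)
    (hinf : {pq : ℕ × ℕ | 0 < pq.1 ∧ 0 < pq.2 ∧ Nat.Coprime pq.1 pq.2 ∧
        |π - (pq.1 : ℝ) / (pq.2 : ℝ)| < 1 / (pq.2 : ℝ) ^ (1 + u / v)}.Infinite)
    (N : ℕ) :
    ∃ p q : ℕ, 0 < q ∧ N ≤ q ∧ 2 * q ≤ p ∧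
      |Real.sin p| ≤ (q : ℝ) ^ (-(u / v)) ∧
      (p : ℝ) ^ u * |Real.sin p| ^ v ≤ (π + 1) ^ u := by
  set S := {pq : ℕ × ℕ | 0 < pq.1 ∧ 0 < pq.2 ∧ Nat.Coprime pq.1 pq.2 ∧
      |π - (pq.1 : ℝ) / (pq.2 : ℝ)| < 1 / (pq.2 : ℝ) ^ (1 + u / v)} with hS
  set M := max N 1 with hM
  -- basic facts used several times
  have hrw : ∀ q : ℕ, 0 < q → 1 / (q : ℝ) ^ (1 + u / v) ≤ 1 := by
    intro q hq
    have hq1 : (1 : ℝ) ≤ q := by exact_mod_cast hq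
    have : (1 : ℝ) ≤ (q : ℝ) ^ (1 + u / v) :=
      Real.one_le_rpow hq1 (by positivity)
    rw [div_le_one (by linarith)]
    linarith
  have hexists : ∃ pq ∈ S, M ≤ pq.2 := by
    by_contra hcon
    push_neg at hcon
    apply hinf
    apply Set.Finite.subset (Set.finite_Icc ((0, 0) : ℕ × ℕ) (5 * M, M))
    rintro ⟨p, q⟩ hpq
    obtain ⟨hp, hq, _, happ⟩ := hpq
    have hqM : q < M := hcon _ ⟨hp, hq, ‹_›, happ⟩
    have hq0 : (0 : ℝ) < q := by exact_mod_cast hq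
    have h1 : |π - (p : ℝ) / q| < 1 := lt_of_lt_of_le happ (hrw q hq)
    have hlt : (p : ℝ) / q < π + 1 := by
      have := abs_lt.1 h1
      linarith [this.1, this.2]
    have hp5 : (p : ℝ) < 5 * q := by
      rw [div_lt_iff₀ hq0] at hlt
      nlinarith [Real.pi_lt_d2]
    have hple : p ≤ 5 * M := by
      have : (p : ℝ) < 5 * M := by
        have : (q : ℝ) ≤ M := by exact_mod_cast hqM.le
        nlinarith
      exact_mod_cast le_of_lt (by exact_mod_cast this)
    simp [Set.mem_Icc, Prod.le_def, hple, hqM.le]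
  obtain ⟨⟨p, q⟩, hmem, hqM⟩ := hexists
  obtain ⟨hp, hq, hcop, happ⟩ := hmem
  have hq0 : (0 : ℝ) < q := by exact_mod_cast hq
  have h1 : |π - (p : ℝ) / q| < 1 := lt_of_lt_of_le happ (hrw q hq)
  have habs := abs_lt.1 h1
  have hlt : (p : ℝ) < (π + 1) * q := by
    have : (p : ℝ) / q < π + 1 := by linarith [habs.1]
    rw [div_lt_iff₀ hq0] at this
    linarith
  have hgt : 2 * (q : ℝ) < p := by
    have : π - 1 < (p : ℝ) / q := by linarith [habs.2]
    rw [lt_div_iff₀ hq0] at this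
    nlinarith [Real.pi_gt_three]
  -- |p - q π| < q ^ (-(u/v))
  have hkey : |(p : ℝ) - q * π| < (q : ℝ) ^ (-(u / v)) := by
    have h2 : |π - (p : ℝ) / q| * q < (1 / (q : ℝ) ^ (1 + u / v)) * q :=
      mul_lt_mul_of_pos_right happ hq0
    have e1 : |π - (p : ℝ) / q| * q = |(p : ℝ) - q * π| := by
      rw [← abs_of_pos hq0, ← abs_mul]
      rw [abs_of_pos hq0]
      rw [sub_mul, div_mul_cancel₀ _ hq0.ne', ← abs_neg]
      ring_nf
    have e2 : (1 / (q : ℝ) ^ (1 + u / v)) * q = (q : ℝ) ^ (-(u / v)) := by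
      rw [Real.rpow_add hq0, Real.rpow_one, Real.rpow_neg hq0.le]
      field_simp
    rw [e1, e2] at h2
    exact h2
  have hsinp : |Real.sin p| ≤ (q : ℝ) ^ (-(u / v)) := by
    have hsin_eq : Real.sin p = (-1 : ℝ) ^ q * Real.sin ((p : ℝ) - q * π) := by
      have h3 := Real.sin_add_int_mul_pi ((p : ℝ) - q * π) (q : ℤ)
      rw [zpow_natCast] at h3
      have h4 : (p : ℝ) - q * π + ((q : ℤ) : ℝ) * π = (p : ℝ) := by push_cast; ring
      rw [h4] at h3
      exact h3
    rw [hsin_eq, abs_mul]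
    have habs1 : |(-1 : ℝ) ^ q| = 1 := by
      rw [abs_pow, abs_neg, abs_one, one_pow]
    rw [habs1, one_mul]
    calc |Real.sin ((p : ℝ) - q * π)| ≤ |(p : ℝ) - q * π| := Real.abs_sin_le_abs
      _ ≤ (q : ℝ) ^ (-(u / v)) := hkey.le
  refine ⟨p, q, hq, le_trans (le_max_left N 1) hqM, ?_, hsinp, ?_⟩
  · exact_mod_cast hgt.le
  · have hsv : |Real.sin p| ^ v ≤ (q : ℝ) ^ (-u) := by
      calc |Real.sin p| ^ v ≤ ((q : ℝ) ^ (-(u / v))) ^ v :=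
            Real.rpow_le_rpow (abs_nonneg _) hsinp hv.le
        _ = (q : ℝ) ^ (-u) := by
            rw [← Real.rpow_mul hq0.le]
            congr 1
            field_simp
    have hpu : (p : ℝ) ^ u ≤ (π + 1) ^ u * (q : ℝ) ^ u := by
      have hpnn : (0 : ℝ) ≤ p := Nat.cast_nonneg p
      calc (p : ℝ) ^ u ≤ ((π + 1) * q) ^ u :=
            Real.rpow_le_rpow hpnn hlt.le hu.le
        _ = (π + 1) ^ u * (q : ℝ) ^ u :=
            Real.mul_rpow (by positivity) hq0.le
    calc (p : ℝ) ^ u * |Real.sin p| ^ v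
        ≤ ((π + 1) ^ u * (q : ℝ) ^ u) * ((q : ℝ) ^ (-u)) := by
          apply mul_le_mul hpu hsv (by positivity) (by positivity)
      _ = (π + 1) ^ u * ((q : ℝ) ^ u * (q : ℝ) ^ (-u)) := by ring
      _ = (π + 1) ^ u := by
          rw [← Real.rpow_add hq0]
          norm_num

lemma claim1 (u v : ℝ) (hu : 0 < u) (hv : 0 < v)
    (hinf : {pq : ℕ × ℕ | 0 < pq.1 ∧ 0 < pq.2 ∧ Nat.Coprime pq.1 pq.2 ∧
        |π - (pq.1 : ℝ) / (pq.2 : ℝ)| < 1 / (pq.2 : ℝ) ^ (1 + u / v)}.Infinite) :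
    ∃ᶠ n : ℕ in atTop, ((π + 1) ^ u)⁻¹ ≤ 1 / ((n : ℝ) ^ u * |Real.sin n| ^ v) := by
  rw [frequently_atTop]
  intro N
  obtain ⟨p, q, hq, hqN, hpq, _, hprod⟩ := key_pair u v hu hv hinf N
  have hp0 : 0 < p := lt_of_lt_of_le (by omega) hpq
  refine ⟨p, by omega, ?_⟩
  have hsp : Real.sin p ≠ 0 := sin_nat_ne_zero hp0
  have hD : 0 < (p : ℝ) ^ u * |Real.sin p| ^ v := by
    apply mul_pos (Real.rpow_pos_of_pos (by exact_mod_cast hp0) u)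
    exact Real.rpow_pos_of_pos (abs_pos.2 hsp) v
  rw [← one_div]
  exact one_div_le_one_div_of_le hD hprod

lemma claim2 (u v : ℝ) (hu : 0 < u) (hv : 0 < v)
    (hinf : {pq : ℕ × ℕ | 0 < pq.1 ∧ 0 < pq.2 ∧ Nat.Coprime pq.1 pq.2 ∧
        |π - (pq.1 : ℝ) / (pq.2 : ℝ)| < 1 / (pq.2 : ℝ) ^ (1 + u / v)}.Infinite)
    (ε : ℝ) (hε : 0 < ε) :
    ∃ᶠ n : ℕ in atTop, 1 / ((n : ℝ) ^ u * |Real.sin n| ^ v) ≤ ε := by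
  have hs : 0 < Real.sin 1 := Real.sin_pos_of_pos_of_lt_pi one_pos (by linarith [Real.pi_gt_three])
  have hs1 : Real.sin 1 ≤ 1 := Real.sin_le_one 1
  set s : ℝ := Real.sin 1 with hsdef
  rw [frequently_atTop]
  intro N
  set K : ℝ := 2 / ε * (2 / s) ^ v with hK
  have hK0 : 0 < K := by positivity
  obtain ⟨M0, hM0⟩ := exists_nat_gt (max ((4 / s) ^ (v / u)) (K ^ (1 / u)))
  obtain ⟨p, q, hq, hqN, hpq, hsinb, _⟩ := key_pair u v hu hv hinf (max N M0)
  have hp0 : 0 < p := lt_of_lt_of_le (by omega) hpq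
  have hq0 : (0 : ℝ) < q := by exact_mod_cast hq
  have hqM0 : (M0 : ℝ) ≤ q := by exact_mod_cast le_trans (le_max_right N M0) hqN
  have hqb1 : (4 / s) ^ (v / u) ≤ (q : ℝ) :=
    le_trans (le_trans (le_max_left _ _) hM0.le) hqM0
  have hqb2 : K ^ (1 / u) ≤ (q : ℝ) :=
    le_trans (le_trans (le_max_right _ _) hM0.le) hqM0
  refine ⟨p + 1, by omega, ?_⟩
  -- |sin p| ≤ s / 4
  have hsp4 : |Real.sin p| ≤ s / 4 := by
    have h4s : (0 : ℝ) < 4 / s := by positivity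
    have hqt : 4 / s ≤ (q : ℝ) ^ (u / v) := by
      calc 4 / s = ((4 / s) ^ (v / u)) ^ (u / v) := by
            rw [← Real.rpow_mul h4s.le]
            rw [div_mul_div_comm]
            rw [mul_comm v u, div_self (by positivity)]
            rw [Real.rpow_one]
        _ ≤ (q : ℝ) ^ (u / v) :=
            Real.rpow_le_rpow (by positivity) hqb1 (by positivity)
    calc |Real.sin p| ≤ (q : ℝ) ^ (-(u / v)) := hsinb
      _ = ((q : ℝ) ^ (u / v))⁻¹ := Real.rpow_neg hq0.le _
      _ ≤ (4 / s)⁻¹ := by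
          apply inv_anti₀ h4s hqt
      _ = s / 4 := by rw [inv_div]
  -- |cos p| ≥ 1 - s/4
  have hcos : 1 - s / 4 ≤ |Real.cos p| := by
    have h1 : 1 - |Real.sin p| ≤ |Real.cos p| := by
      nlinarith [Real.sin_sq_add_cos_sq (p : ℝ), sq_abs (Real.sin (p : ℝ)),
        sq_abs (Real.cos (p : ℝ)), abs_nonneg (Real.sin (p : ℝ)),
        abs_nonneg (Real.cos (p : ℝ)),
        mul_nonneg (abs_nonneg (Real.sin (p : ℝ))) (abs_nonneg (Real.cos (p : ℝ)))]
    linarith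
  -- |sin (p+1)| ≥ s / 2
  have hsinp1 : s / 2 ≤ |Real.sin ((p : ℝ) + 1)| := by
    have hadd : Real.sin ((p : ℝ) + 1) = Real.sin p * Real.cos 1 + Real.cos p * s :=
      Real.sin_add p 1
    have hlow : |Real.cos p * s| - |Real.sin p * Real.cos 1| ≤ |Real.sin ((p : ℝ) + 1)| := by
      rw [hadd]
      calc |Real.cos (p : ℝ) * s| - |Real.sin (p : ℝ) * Real.cos 1|
          = |Real.cos (p : ℝ) * s| - |-(Real.sin (p : ℝ) * Real.cos 1)| := by rw [abs_neg]
        _ ≤ |Real.cos (p : ℝ) * s - -(Real.sin (p : ℝ) * Real.cos 1)| := abs_sub_abs_le_abs_sub _ _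
        _ = |Real.sin (p : ℝ) * Real.cos 1 + Real.cos (p : ℝ) * s| := by ring_nf
    have e1 : |Real.cos (p : ℝ) * s| = |Real.cos (p : ℝ)| * s := by
      rw [abs_mul, abs_of_pos hs]
    have e2 : |Real.sin (p : ℝ) * Real.cos 1| ≤ |Real.sin (p : ℝ)| := by
      rw [abs_mul]
      nlinarith [abs_nonneg (Real.sin (p : ℝ)), Real.abs_cos_le_one 1,
        abs_nonneg (Real.cos (1 : ℝ))]
    nlinarith [abs_nonneg (Real.cos (p : ℝ))]
  -- conclude
  have hcast : ((p + 1 : ℕ) : ℝ) = (p : ℝ) + 1 := by push_cast; ring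
  have hqup : (q : ℝ) ≤ (p : ℝ) + 1 := by
    have h5 : (q : ℝ) ≤ (p : ℝ) := by
      have : q ≤ p := by omega
      exact_mod_cast this
    linarith
  have hKq : K ≤ (q : ℝ) ^ u := by
    calc K = (K ^ (1 / u)) ^ u := by
          rw [← Real.rpow_mul hK0.le, one_div, inv_mul_cancel₀ hu.ne', Real.rpow_one]
      _ ≤ (q : ℝ) ^ u := Real.rpow_le_rpow (by positivity) hqb2 hu.le
  have hD : 2 / ε ≤ ((p : ℝ) + 1) ^ u * |Real.sin ((p : ℝ) + 1)| ^ v := by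
    have step1 : (q : ℝ) ^ u ≤ ((p : ℝ) + 1) ^ u :=
      Real.rpow_le_rpow hq0.le hqup hu.le
    have step2 : (s / 2) ^ v ≤ |Real.sin ((p : ℝ) + 1)| ^ v :=
      Real.rpow_le_rpow (by positivity) hsinp1 hv.le
    have key : K * (s / 2) ^ v = 2 / ε := by
      rw [hK, mul_assoc, ← Real.mul_rpow (by positivity) (by positivity)]
      rw [div_mul_div_comm]
      rw [mul_comm 2 s, div_self (by positivity), Real.one_rpow, mul_one]
    calc 2 / ε = K * (s / 2) ^ v := key.symm
      _ ≤ (q : ℝ) ^ u * (s / 2) ^ v := by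
          apply mul_le_mul_of_nonneg_right hKq (by positivity)
      _ ≤ ((p : ℝ) + 1) ^ u * |Real.sin ((p : ℝ) + 1)| ^ v := by
          apply mul_le_mul step1 step2 (by positivity) (by positivity)
  have h2c : (0 : ℝ) < 2 / ε := by positivity
  rw [hcast]
  calc 1 / (((p : ℝ) + 1) ^ u * |Real.sin ((p : ℝ) + 1)| ^ v)
      ≤ 1 / (2 / ε) := one_div_le_one_div_of_le h2c hD
    _ = ε / 2 := by rw [one_div_div]
    _ ≤ ε := by linarith

open Real Filter in
theorem seq_diverges (u v : ℝ) (hu : 0 < u) (hv : 0 < v)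
    (hinf : {pq : ℕ × ℕ | 0 < pq.1 ∧ 0 < pq.2 ∧ Nat.Coprime pq.1 pq.2 ∧
        |π - (pq.1 : ℝ) / (pq.2 : ℝ)| < 1 / (pq.2 : ℝ) ^ (1 + u / v)}.Infinite) :
    ¬ ∃ L : ℝ, Tendsto (fun n : ℕ => 1 / ((n : ℝ) ^ u * |Real.sin n| ^ v)) atTop (nhds L) := by
  rintro ⟨L, hL⟩
  have hpi1 : (0 : ℝ) < (π + 1) ^ u := Real.rpow_pos_of_pos (by positivity) u
  set c : ℝ := ((π + 1) ^ u)⁻¹ with hc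
  have hc0 : 0 < c := inv_pos.2 hpi1
  have hLc : c ≤ L :=
    isClosed_Ici.mem_of_frequently_of_tendsto (claim1 u v hu hv hinf) hL
  have hLc2 : L ≤ c / 2 :=
    isClosed_Iic.mem_of_frequently_of_tendsto (claim2 u v hu hv hinf (c / 2) (by linarith)) hL
  linarith
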